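/- Let d ≥ 2 be an integer and let α = 2/(d+1). For λ > 0 set u_λ = κ_d^{−1/(d+1)} λ^{1/(d+1)}. Then for every fixed h ≥ 0, lim_{λ → ∞} φ_{λ,α,u_λ}(h) = s₁( κ_d^{2/(d+1)} · h ). -/

import Mathlib

open MeasureTheory Real Filter

/-- `kappa j` is the Lebesgue volume of the unit ball in `ℝ^j`. -/
noncomputable def kappa (j : ℕ) : ℝ :=
  (volume (Metric.ball (0 : EuclideanSpace ℝ (Fin j)) 1)).toReal

/-- Normalized surface area `s₁` of a spherical cap of height `h` (equals `1` for `h > 2`). -/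
noncomputable def s1 (d : ℕ) (h : ℝ) : ℝ :=
  if h ≤ 2 then
    (((d : ℝ) - 1) * kappa (d - 1) / ((d : ℝ) * kappa d)) *
      ∫ θ in (0:ℝ)..(Real.arccos (1 - h)), (Real.sin θ) ^ (d - 2)
  else 1

/-- The function `g_{λ,α,u}(h)`. -/
noncomputable def gfun (lam al u h : ℝ) : ℝ :=
  min (max ((lam ^ al / u ^ 2 * h - (1 / 2) * (1 + lam ^ al) / u ^ 4 * h ^ 2) /
      (1 - h / u ^ 2)) 0) 2

/-- The density `φ_{λ,α,u}(h)`. -/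
noncomputable def phi (d : ℕ) (lam al u h : ℝ) : ℝ :=
  lam * (1 + lam ^ al) ^ d / u ^ (d + 1) / (kappa d * lam ^ ((d : ℝ) * al)) *
    s1 d (gfun lam al u h) * (1 - h / u ^ 2) ^ (d - 1)

lemma kappa_eq (j : ℕ) (hj : j ≠ 0) :
    kappa j = Real.sqrt π ^ j / Real.Gamma ((j : ℝ) / 2 + 1) := by
  have : Nonempty (Fin j) := Fin.pos_iff_nonempty.mp (Nat.pos_of_ne_zero hj)
  rw [kappa, EuclideanSpace.volume_ball, Fintype.card_fin, ENNReal.ofReal_one, one_pow, one_mul,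
    ENNReal.toReal_ofReal]
  exact div_nonneg (pow_nonneg (Real.sqrt_nonneg _) _)
    (Real.Gamma_pos_of_pos (by positivity)).le

lemma kappa_pos (j : ℕ) (hj : j ≠ 0) : 0 < kappa j := by
  rw [kappa_eq j hj]
  exact div_pos (pow_pos (Real.sqrt_pos.mpr Real.pi_pos) _)
    (Real.Gamma_pos_of_pos (by positivity))

lemma kappa_step (j : ℕ) (hj : j ≠ 0) :
    kappa (j + 2) = 2 * π / ((j : ℝ) + 2) * kappa j := by
  rw [kappa_eq j hj, kappa_eq (j + 2) (by omega)]
  have h1 : ((j : ℝ) + 2) / 2 + 1 = ((j : ℝ) / 2 + 1) + 1 := by ring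
  have h2 : (0:ℝ) < (j : ℝ) / 2 + 1 := by positivity
  have h3 : Real.Gamma ((j : ℝ) / 2 + 1) ≠ 0 := (Real.Gamma_pos_of_pos h2).ne'
  push_cast
  rw [h1, Real.Gamma_add_one h2.ne']
  have h4 : Real.sqrt π ^ (j + 2) = Real.sqrt π ^ j * π := by
    rw [pow_add, sq_sqrt Real.pi_pos.le]
  rw [h4]
  field_simp

lemma kappa_one : kappa 1 = 2 := by
  rw [kappa_eq 1 one_ne_zero]
  have h : ((1:ℕ):ℝ) / 2 + 1 = 1/2 + 1 := by norm_num
  rw [h, Real.Gamma_add_one (by norm_num), Real.Gamma_one_half_eq]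
  have := Real.sqrt_pos.mpr Real.pi_pos
  field_simp

lemma kappa_two : kappa 2 = π := by
  rw [kappa_eq 2 two_ne_zero]
  have h : ((2:ℕ):ℝ) / 2 + 1 = 1 + 1 := by norm_num
  rw [h, Real.Gamma_add_one one_ne_zero, Real.Gamma_one, sq_sqrt Real.pi_pos.le]
  norm_num

lemma key2 : ∀ n : ℕ, ((n : ℝ) + 1) * kappa (n + 1) * (∫ θ in (0:ℝ)..π, Real.sin θ ^ n)
    = ((n : ℝ) + 2) * kappa (n + 2) := by
  intro n
  induction n using Nat.strong_induction_on with
  | _ n ih =>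
    match n, ih with
    | 0, _ => simp [kappa_one, kappa_two]
    | 1, _ =>
      simp only [pow_one, integral_sin, Real.cos_zero, Real.cos_pi]
      rw [show (1:ℕ)+2 = 1+2 from rfl, kappa_step 1 one_ne_zero, kappa_two, kappa_one]
      push_cast; ring
    | (n+2), ih =>
      have hrec := integral_sin_pow (a := 0) (b := π) n
      rw [Real.sin_zero, Real.sin_pi, Real.cos_zero, Real.cos_pi] at hrec
      have hIH := ih n (by omega)
      have hk1 : kappa (n + 3) = 2 * π / ((n:ℝ) + 3) * kappa (n+1) := by
        have := kappa_step (n+1) (Nat.succ_ne_zero n)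
        push_cast at this ⊢
        convert this using 2 <;> push_cast <;> ring
      have hk2 : kappa (n + 4) = 2 * π / ((n:ℝ) + 4) * kappa (n+2) := by
        have := kappa_step (n+2) (by omega)
        push_cast at this ⊢
        convert this using 2 <;> push_cast <;> ring
      have h3 : ((n:ℝ) + 3) ≠ 0 := by positivity
      have h4 : ((n:ℝ) + 4) ≠ 0 := by positivity
      have h2 : ((n:ℝ) + 2) ≠ 0 := by positivity
      push_cast
      rw [show n + 2 + 1 = n + 3 from rfl, show n + 2 + 2 = n + 4 from rfl, hk1, hk2, hrec]
      push_cast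
      field_simp
      rw [zero_pow (Nat.succ_ne_zero n)]
      linear_combination (((n:ℝ)+3) * ((n:ℝ)+4)) * hIH

noncomputable def Ffun (d : ℕ) (x : ℝ) : ℝ :=
  (((d : ℝ) - 1) * kappa (d - 1) / ((d : ℝ) * kappa d)) *
    ∫ θ in (0:ℝ)..(Real.arccos (1 - x)), (Real.sin θ) ^ (d - 2)

lemma Ffun_continuous (d : ℕ) : Continuous (Ffun d) := by
  refine continuous_const.mul ?_
  exact (intervalIntegral.continuous_primitive
      (fun a b => (Continuous.pow Real.continuous_sin _).intervalIntegrable a b) 0).comp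
    (Real.continuous_arccos.comp (continuous_const.sub continuous_id))

lemma arccos_of_ge_two {x : ℝ} (hx : 2 ≤ x) : Real.arccos (1 - x) = π := by
  rw [Real.arccos_eq_pi_div_two_sub_arcsin, Real.arcsin_of_le_neg_one (by linarith)]
  ring

lemma Ffun_top (d : ℕ) (hd : 2 ≤ d) {x : ℝ} (hx : 2 ≤ x) : Ffun d x = 1 := by
  obtain ⟨n, rfl⟩ : ∃ n, d = n + 2 := ⟨d - 2, by omega⟩
  have hkey := key2 n
  rw [Ffun, arccos_of_ge_two hx]
  have h1 : (n + 2 : ℕ) - 1 = n + 1 := by omega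
  have h2 : (n + 2 : ℕ) - 2 = n := by omega
  rw [h1, h2]
  have hk : (0:ℝ) < ((n:ℝ) + 2) * kappa (n + 2) := by
    have := kappa_pos (n+2) (by omega); positivity
  push_cast
  rw [div_mul_eq_mul_div, div_eq_one_iff_eq (by push_cast at hk; exact hk.ne')]
  push_cast at hkey
  linarith [hkey]

lemma s1_eq_Ffun (d : ℕ) (hd : 2 ≤ d) (x : ℝ) : s1 d x = Ffun d x := by
  rw [s1, Ffun]
  split_ifs with hx
  · rfl
  · rw [← Ffun, Ffun_top d hd (le_of_not_ge hx)]

lemma Ffun_clamp (d : ℕ) (hd : 2 ≤ d) {x : ℝ} (hx : 0 ≤ x) :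
    Ffun d (min (max x 0) 2) = Ffun d x := by
  rw [max_eq_left hx]
  rcases le_or_gt x 2 with h2 | h2
  · rw [min_eq_left h2]
  · rw [min_eq_right h2.le, Ffun, Ffun, arccos_of_ge_two le_rfl, arccos_of_ge_two h2.le]

/-- for `α = 2/(d+1)` and `u_λ = κ_d^{-1/(d+1)} λ^{1/(d+1)}`,
`φ_{λ,α,u_λ}(h) → s₁(κ_d^{2/(d+1)} h)` for every fixed `h ≥ 0`. -/
theorem phi_limit_critical_upper (d : ℕ) (hd : 2 ≤ d) (h : ℝ) (hh : 0 ≤ h) :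
    Tendsto (fun lam : ℝ =>
        phi d lam (2 / ((d : ℝ) + 1))
          (kappa d ^ (-(1 : ℝ) / ((d : ℝ) + 1)) * lam ^ ((1 : ℝ) / ((d : ℝ) + 1))) h)
      atTop (nhds (s1 d (kappa d ^ ((2 : ℝ) / ((d : ℝ) + 1)) * h))) := by
  have hκ : 0 < kappa d := kappa_pos d (by omega)
  set p : ℝ := (d : ℝ) + 1 with hp
  have hp0 : (0:ℝ) < p := by positivity
  set c : ℝ := kappa d ^ ((2:ℝ) / p) with hcdef
  have hc : 0 < c := Real.rpow_pos_of_pos hκ _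
  set G : ℝ → ℝ := fun y => (y + 1) ^ d *
      Ffun d (min (max ((c * h - 1 / 2 * c ^ 2 * (y ^ 2 + y) * h ^ 2) / (1 - c * h * y)) 0) 2) *
      (1 - c * h * y) ^ (d - 1) with hGdef
  have hGcont : ContinuousAt G 0 := by
    have hb : ContinuousAt
        (fun y : ℝ => (c * h - 1 / 2 * c ^ 2 * (y ^ 2 + y) * h ^ 2) / (1 - c * h * y)) 0 := by
      refine ContinuousAt.div (by fun_prop) (by fun_prop) (by norm_num)
    exact ((by fun_prop : ContinuousAt (fun y : ℝ => (y + 1) ^ d) 0).mul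
      (((Ffun_continuous d).continuousAt).comp ((hb.max continuousAt_const).min
        continuousAt_const))).mul (by fun_prop)
  have hG0 : G 0 = Ffun d (c * h) := by
    rw [hGdef]
    simp only []
    norm_num
    exact Ffun_clamp d hd (mul_nonneg hc.le hh)
  have hm : Tendsto (fun lam : ℝ => lam ^ (-(2 / p))) atTop (nhds 0) :=
    tendsto_rpow_neg_atTop (by positivity)
  have htend : Tendsto (fun lam : ℝ => G (lam ^ (-(2 / p)))) atTop (nhds (G 0)) :=
    hGcont.tendsto.comp hm
  rw [s1_eq_Ffun d hd, ← hG0]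
  refine Tendsto.congr' ?_ htend
  filter_upwards [eventually_gt_atTop (0:ℝ)] with lam hlam
  -- abbreviations
  set u : ℝ := kappa d ^ (-(1:ℝ) / p) * lam ^ ((1:ℝ) / p) with hudef
  set y : ℝ := lam ^ (-(2 / p)) with hydef
  set A : ℝ := kappa d ^ ((2:ℝ) / p) with hAdef
  set B : ℝ := lam ^ ((2:ℝ) / p) with hBdef
  have hB : 0 < B := Real.rpow_pos_of_pos hlam _
  have hyB : y = B⁻¹ := by
    rw [hydef, hBdef, ← Real.rpow_neg hlam.le]
  have hun : ∀ n : ℕ, u ^ n = kappa d ^ ((-(1:ℝ) / p) * n) * lam ^ (((1:ℝ) / p) * n) := by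
    intro n
    rw [hudef, mul_pow, ← Real.rpow_natCast (kappa d ^ (-(1:ℝ)/p)) n,
      ← Real.rpow_natCast (lam ^ ((1:ℝ)/p)) n, ← Real.rpow_mul hκ.le, ← Real.rpow_mul hlam.le]
  have hlam_al : lam ^ ((2:ℝ) / p) = B := rfl
  have hu2 : u ^ 2 = A⁻¹ * B := by
    rw [hun 2, show (-(1:ℝ)/p * ((2:ℕ):ℝ)) = -(2/p) by push_cast; ring,
      show ((1:ℝ)/p * ((2:ℕ):ℝ)) = 2/p by push_cast; ring, Real.rpow_neg hκ.le]
  have hu4 : u ^ 4 = (A * A)⁻¹ * (B * B) := by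
    rw [hun 4, show (-(1:ℝ)/p * ((4:ℕ):ℝ)) = -(2/p + 2/p) by push_cast; ring,
      show ((1:ℝ)/p * ((4:ℕ):ℝ)) = 2/p + 2/p by push_cast; ring,
      Real.rpow_neg hκ.le, Real.rpow_add hκ _ _, Real.rpow_add hlam _ _]
  have hup : u ^ (d + 1) = (kappa d)⁻¹ * lam := by
    rw [hun (d + 1), show (-(1:ℝ)/p * ((d+1:ℕ):ℝ)) = -1 by rw [hp]; push_cast; field_simp,
      show ((1:ℝ)/p * ((d+1:ℕ):ℝ)) = 1 by rw [hp]; push_cast; field_simp,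
      Real.rpow_neg_one, Real.rpow_one]
  have hlamd : lam ^ ((d:ℝ) * (2 / p)) = B ^ d := by
    rw [mul_comm, Real.rpow_mul hlam.le, hBdef, Real.rpow_natCast]
  -- now rewrite phi
  show G y = phi d lam (2 / p) u h
  symm
  rw [phi, gfun, s1_eq_Ffun d hd, hu2, hu4, hup, hlamd, hGdef]
  have e1 : lam ^ (2 / p) / (A⁻¹ * B) * h = c * h := by
    rw [hlam_al, hcdef]; field_simp
  have e2 : 1 / 2 * (1 + lam ^ (2 / p)) / ((A * A)⁻¹ * (B * B)) * h ^ 2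
      = 1 / 2 * c ^ 2 * (y ^ 2 + y) * h ^ 2 := by
    rw [hlam_al, hcdef, hyB]
    have : A ≠ 0 := hc.ne'
    field_simp
  have e3 : h / (A⁻¹ * B) = c * h * y := by
    rw [hcdef, hyB]
    have : A ≠ 0 := hc.ne'
    field_simp
  have e4 : lam * (1 + lam ^ (2 / p)) ^ d / ((kappa d)⁻¹ * lam) / (kappa d * B ^ d)
      = (y + 1) ^ d := by
    rw [hlam_al, hyB, show (B⁻¹ + 1) = (1 + B) / B by field_simp, div_pow]
    field_simp
  rw [e1, e2, e3, e4]
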